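/- Let C ⊆ {0,1}^N be a finite concept class with |C| ≥ 2 and let γ(C) > 0 be its combinatorial parameter. Then any sequence of membership-query answers consistent with a fixed target, where each query is chosen to maximize the eliminated fraction, shrinks the candidate set by a factor at least (1 − γ(C)) per query; consequently, after T ≥ log(|C|)/log(1/(1−γ(C))) such queries at most one concept remains. In particular O(log|C|/γ(C)) queries suffice. -/

import Mathlib

open Finset

/-- `γ'(C',i,b)`: the fraction of concepts `c ∈ C'` with `c i = b`. -/
noncomputable def gammaFrac {N : ℕ} (C' : Finset (Fin N → Bool)) (i : Fin N) (b : Bool) : ℝ :=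
  ((C'.filter fun c => c i = b).card : ℝ) / C'.card

/-- `γ'(C',i) = min_b γ'(C',i,b)`. -/
noncomputable def gammaIdx {N : ℕ} (C' : Finset (Fin N → Bool)) (i : Fin N) : ℝ :=
  min (gammaFrac C' i false) (gammaFrac C' i true)

/-- `γ'(C') = max_i γ'(C',i)`. -/
noncomputable def gammaSet {N : ℕ} (C' : Finset (Fin N → Bool)) : ℝ :=
  ⨆ i : Fin N, gammaIdx C' i

/-- `γ(C) = min over C' ⊆ C with |C'| ≥ 2 of γ'(C')`. -/
noncomputable def gammaC {N : ℕ} (C : Finset (Fin N → Bool)) : ℝ :=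
  sInf {x : ℝ | ∃ C' : Finset (Fin N → Bool), C' ⊆ C ∧ 2 ≤ C'.card ∧ x = gammaSet C'}

/-- Greedy membership queries shrink the candidate set by a factor `1 - γ(C)` per query,
so after `T ≥ log|C| / log(1/(1-γ(C)))` queries at most one concept remains. -/
lemma gammaFrac_nonneg {N : ℕ} (C' : Finset (Fin N → Bool)) (i : Fin N) (b : Bool) :
    0 ≤ gammaFrac C' i b := by
  unfold gammaFrac; positivity

lemma gammaFrac_sum {N : ℕ} (C' : Finset (Fin N → Bool)) (i : Fin N) (h : 0 < C'.card) :
    gammaFrac C' i false + gammaFrac C' i true = 1 := by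
  unfold gammaFrac
  rw [← add_div, div_eq_one_iff_eq (by positivity)]
  rw [← Nat.cast_add]
  norm_cast
  have h2 := Finset.card_filter_add_card_filter_not (s := C') (p := fun c => c i = false)
  simp only [Bool.not_eq_false] at h2
  exact h2

lemma gammaSet_nonneg {N : ℕ} (C' : Finset (Fin N → Bool)) : 0 ≤ gammaSet C' :=
  Real.iSup_nonneg fun i => le_min (gammaFrac_nonneg C' i false) (gammaFrac_nonneg C' i true)

lemma Npos {N : ℕ} (C : Finset (Fin N → Bool)) (hC : 2 ≤ C.card) : 0 < N := by
  by_contra h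
  have hN : N = 0 := by omega
  subst hN
  have := Finset.card_le_univ C
  simp at this
  omega

lemma gammaC_le {N : ℕ} (C C' : Finset (Fin N → Bool)) (h1 : C' ⊆ C) (h2 : 2 ≤ C'.card) :
    gammaC C ≤ gammaSet C' := by
  apply csInf_le
  · exact ⟨0, fun x ⟨D, _, _, hx⟩ => hx ▸ gammaSet_nonneg D⟩
  · exact ⟨C', h1, h2, rfl⟩

theorem greedy_exact_learning {N : ℕ} (C : Finset (Fin N → Bool))
    (hC : 2 ≤ C.card) (hγ : 0 < gammaC C) :
    -- the greedy query eliminates at least a γ(C)-fraction, whatever the answer: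
    (∀ C' : Finset (Fin N → Bool), C' ⊆ C → 2 ≤ C'.card →
      ∃ i : Fin N, ∀ b : Bool,
        ((C'.filter fun c => c i = b).card : ℝ) ≤ (1 - gammaC C) * C'.card) ∧
    -- consequently, any query process shrinking by a factor `1 - γ(C)` per step
    -- leaves at most one candidate after `T ≥ log|C|/log(1/(1-γ(C)))` steps:
    (∀ Cs : ℕ → Finset (Fin N → Bool), Cs 0 = C →
      (∀ k : ℕ, Cs (k + 1) ⊆ Cs k ∧
        (2 ≤ (Cs k).card → ((Cs (k + 1)).card : ℝ) ≤ (1 - gammaC C) * (Cs k).card)) →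
      ∀ T : ℕ, Real.log C.card / Real.log (1 / (1 - gammaC C)) ≤ T → (Cs T).card ≤ 1) := by
  have hN : 0 < N := Npos C hC
  haveI : Nonempty (Fin N) := ⟨⟨0, hN⟩⟩
  -- γ ≤ 1/2
  have hhalf : gammaC C ≤ 1 / 2 := by
    refine le_trans (gammaC_le C C (subset_rfl) hC) ?_
    apply ciSup_le
    intro i
    have hs := gammaFrac_sum C i (by omega)
    unfold gammaIdx
    rcases min_le_iff.mpr (Or.inl (le_refl (gammaFrac C i false))) with h
    have := min_le_min (le_refl (gammaFrac C i false)) (le_refl (gammaFrac C i true))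
    rcases le_total (gammaFrac C i false) (gammaFrac C i true) with hle | hle
    · rw [min_eq_left hle]; linarith
    · rw [min_eq_right hle]; linarith
  constructor
  · intro C' hsub hcard
    obtain ⟨i, hi⟩ := exists_eq_ciSup_of_finite (f := fun i => gammaIdx C' i)
    refine ⟨i, fun b => ?_⟩
    have hcard' : (0:ℝ) < C'.card := by positivity
    have hγle : gammaC C ≤ gammaIdx C' i := by
      rw [hi]; exact gammaC_le C C' hsub hcard
    have hs := gammaFrac_sum C' i (by omega)
    have hmin : gammaC C ≤ gammaFrac C' i (!b) := by
      refine le_trans hγle ?_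
      cases b <;> simp [gammaIdx, min_le_left, min_le_right]
    have hfrac : gammaFrac C' i b ≤ 1 - gammaC C := by
      cases b <;> simp at hmin <;> linarith
    have : gammaFrac C' i b * C'.card ≤ (1 - gammaC C) * C'.card :=
      mul_le_mul_of_nonneg_right hfrac (le_of_lt hcard')
    unfold gammaFrac at this
    rwa [div_mul_cancel₀ _ (ne_of_gt hcard')] at this
  · intro Cs h0 hstep T hT
    set q : ℝ := 1 - gammaC C with hq
    have hq0 : 0 < q := by rw [hq]; linarith
    have hq1 : q < 1 := by rw [hq]; linarith
    -- key invariant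
    have key : ∀ k, (Cs k).card ≤ 1 ∨ ((Cs k).card : ℝ) ≤ q ^ k * C.card := by
      intro k
      induction k with
      | zero => right; rw [h0]; simp
      | succ n ih =>
        rcases ih with h1 | h2
        · left
          exact le_trans (Finset.card_le_card (hstep n).1) h1
        · rcases le_or_gt (Cs n).card 1 with h1 | h1
          · left; exact le_trans (Finset.card_le_card (hstep n).1) h1
          · right
            have := (hstep n).2 (by omega)
            calc ((Cs (n+1)).card : ℝ) ≤ q * (Cs n).card := this
              _ ≤ q * (q ^ n * C.card) := by
                  apply mul_le_mul_of_nonneg_left h2 (le_of_lt hq0)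
              _ = q ^ (n+1) * C.card := by ring
    rcases key T with h1 | h2
    · exact h1
    · by_contra hgt
      push_neg at hgt
      -- q^T * |C| ≤ 1
      have hlogq : 0 < Real.log (1 / q) := by
        apply Real.log_pos
        rw [one_div]
        exact (one_lt_inv₀ hq0).mpr hq1
      have hT' : Real.log C.card ≤ T * Real.log (1 / q) := by
        rw [div_le_iff₀ hlogq] at hT
        linarith
      have hlog1q : Real.log (1 / q) = - Real.log q := by
        rw [one_div, Real.log_inv]
      have hlog : Real.log (q ^ T * C.card) ≤ 0 := by
        rw [Real.log_mul (by positivity) (by positivity), Real.log_pow]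
        rw [hlog1q] at hT'
        linarith
      have hle1 : q ^ T * (C.card : ℝ) ≤ 1 := by
        have hpos : (0:ℝ) < q ^ T * C.card := by positivity
        by_contra hgt1
        push_neg at hgt1
        have := Real.log_pos hgt1
        linarith
      have : (2:ℝ) ≤ ((Cs T).card : ℝ) := by exact_mod_cast hgt
      linarith
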